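/- Let Ẑ be a strictly positive random variable with E[Ẑ] = Z > 0, such that log Ẑ is integrable, and let δ = log Z − E[log Ẑ] ≥ 0. Then the mean absolute deviation of log Ẑ is bounded: E[|log Ẑ − E[log Ẑ]|] ≤ 2 + 2δ. -/
import Mathlib


open MeasureTheory ProbabilityTheory Real

/-- For a strictly positive unbiased estimator `Ẑ` of `Z > 0` with
`log Ẑ` integrable and bias `δ = log Z - E[log Ẑ]`, the mean absolute deviation
of `log Ẑ` satisfies `E[|log Ẑ - E[log Ẑ]|] ≤ 2 + 2δ`. -/
theorem mad_log_estimator_bound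
    {Ω : Type*} [MeasureSpace Ω] [IsProbabilityMeasure (ℙ : Measure Ω)]
    (Zhat : Ω → ℝ) (Z : ℝ) (hZ : 0 < Z)
    (hmeas : Measurable Zhat)
    (hpos : ∀ ω, 0 < Zhat ω)
    (hint : Integrable Zhat)
    (hmean : ∫ ω, Zhat ω = Z)
    (hlogint : Integrable (fun ω => Real.log (Zhat ω)))
    (δ : ℝ) (hδ : δ = Real.log Z - ∫ ω, Real.log (Zhat ω)) :
    ∫ ω, |Real.log (Zhat ω) - ∫ ω', Real.log (Zhat ω')| ≤ 2 + 2 * δ := by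
  set m : ℝ := ∫ ω', Real.log (Zhat ω') with hm
  -- δ ≥ 0 :
  have hδ0 : 0 ≤ δ := by
    have hle : ∀ ω, Real.log (Zhat ω) ≤ Zhat ω / Z - 1 + Real.log Z := by
      intro ω
      have h := Real.log_le_sub_one_of_pos (div_pos (hpos ω) hZ)
      have := Real.log_div (hpos ω).ne' hZ.ne'
      linarith [h, this.symm.le, this.le]
    have hi1 : Integrable (fun ω => Zhat ω / Z - 1) := by
      exact (hint.div_const Z).sub (integrable_const 1)
    have hi : Integrable (fun ω => Zhat ω / Z - 1 + Real.log Z) := by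
      exact hi1.add (integrable_const _)
    have := integral_mono hlogint hi hle
    have hInt : ∫ ω, (Zhat ω / Z - 1 + Real.log Z) = Z / Z - 1 + Real.log Z := by
      rw [integral_add hi1 (integrable_const _),
        integral_sub (hint.div_const Z) (integrable_const 1),
        integral_div, hmean, integral_const, integral_const]
      simp
    rw [hInt, div_self hZ.ne'] at this
    simp only [hδ, hm]
    linarith
  -- integrability of positive part
  have hintm : Integrable (fun ω => Real.log (Zhat ω) - m) := hlogint.sub (integrable_const m)
  have hintp : Integrable (fun ω => max (Real.log (Zhat ω) - m) 0) := by
    have : (fun ω => max (Real.log (Zhat ω) - m) 0) =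
        fun ω => ((Real.log (Zhat ω) - m) + |Real.log (Zhat ω) - m|) / 2 := by
      funext ω
      rcases le_or_gt (Real.log (Zhat ω) - m) 0 with h | h
      · rw [max_eq_right h, abs_of_nonpos h]; ring
      · rw [max_eq_left h.le, abs_of_pos h]; ring
    rw [this]
    exact (hintm.add hintm.abs).div_const 2
  -- |y| = 2 max y 0 - y
  have habs : ∀ ω, |Real.log (Zhat ω) - m| =
      2 * max (Real.log (Zhat ω) - m) 0 - (Real.log (Zhat ω) - m) := by
    intro ω
    rcases le_or_gt (Real.log (Zhat ω) - m) 0 with h | h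
    · rw [max_eq_right h, abs_of_nonpos h]; ring
    · rw [max_eq_left h.le, abs_of_pos h]; ring
  have hzero : ∫ ω, (Real.log (Zhat ω) - m) = 0 := by
    rw [integral_sub hlogint (integrable_const m), integral_const]
    simp [hm]
  have hrw : ∫ ω, |Real.log (Zhat ω) - m| = 2 * ∫ ω, max (Real.log (Zhat ω) - m) 0 := by
    calc ∫ ω, |Real.log (Zhat ω) - m|
        = ∫ ω, (2 * max (Real.log (Zhat ω) - m) 0 - (Real.log (Zhat ω) - m)) := by
          exact integral_congr_ae (Filter.Eventually.of_forall habs)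
      _ = (∫ ω, 2 * max (Real.log (Zhat ω) - m) 0) - ∫ ω, (Real.log (Zhat ω) - m) := by
          exact integral_sub (hintp.const_mul 2) hintm
      _ = 2 * ∫ ω, max (Real.log (Zhat ω) - m) 0 := by
          rw [hzero, integral_const_mul]; ring
  -- pointwise bound on positive part
  have hbd : ∀ ω, max (Real.log (Zhat ω) - m) 0 ≤ Zhat ω / Z + δ := by
    intro ω
    have hld := Real.log_div (hpos ω).ne' hZ.ne'
    have hlog : Real.log (Zhat ω) - m = Real.log (Zhat ω / Z) + δ := by
      rw [hld]; rw [hδ] at *; ring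
    have h1 : Real.log (Zhat ω / Z) ≤ Zhat ω / Z :=
      (Real.log_le_sub_one_of_pos (div_pos (hpos ω) hZ)).trans (by linarith)
    have h2 : (0:ℝ) ≤ Zhat ω / Z + δ := add_nonneg (div_pos (hpos ω) hZ).le hδ0
    rw [hlog]
    exact max_le (by linarith) h2
  have hintbd : Integrable (fun ω => Zhat ω / Z + δ) :=
    (hint.div_const Z).add (integrable_const δ)
  have hmono := integral_mono hintp hintbd hbd
  have heval : ∫ ω, (Zhat ω / Z + δ) = 1 + δ := by
    rw [integral_add (hint.div_const Z) (integrable_const δ), integral_div, hmean,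
      integral_const, div_self hZ.ne']
    simp
  rw [hrw]
  rw [heval] at hmono
  linarith
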